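/- Suppose the function ω ↦ s(B(ω), C(ω)) is integrable, as are ω ↦ s(0, C(ω)) and ω ↦ s(1, C(ω)). If E[s(B, C) | σ(C)] = 0 almost surely, then almost surely s(B(ω), C(ω)) = (s(1, C(ω)) − s(0, C(ω))) · (B(ω) − E[B | σ(C)](ω)). (Here E[B | σ(C)] is a version of the conditional probability P(B = 1 | C).) -/

import Mathlib

open MeasureTheory

/-- binary-action centering.
Let `(Ω, ℱ, P)` be a probability space, `E` a measurable space, `C : Ω → E` measurable,
`B : Ω → ℝ` measurable taking values in `{0,1}`, and `s : ℝ × E → ℝ` jointly measurable.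
If `s(B,C)`, `s(0,C)`, `s(1,C)` are integrable and `E[s(B,C) | σ(C)] = 0` a.s., then a.s.
`s(B(ω), C(ω)) = (s(1, C(ω)) − s(0, C(ω))) · (B(ω) − E[B | σ(C)](ω))`,
where `E[B | σ(C)]` is a version of the conditional probability `P(B = 1 | C)`. -/
theorem binary_action_centering
    {Ω E : Type*} {mΩ : MeasurableSpace Ω} {mE : MeasurableSpace E}
    (μ : Measure Ω) [IsProbabilityMeasure μ]
    (C : Ω → E) (hC : Measurable C)
    (B : Ω → ℝ) (hB : Measurable B) (hB01 : ∀ ω, B ω = 0 ∨ B ω = 1)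
    (s : ℝ × E → ℝ) (hs : Measurable s)
    (hint : Integrable (fun ω => s (B ω, C ω)) μ)
    (hint0 : Integrable (fun ω => s (0, C ω)) μ)
    (hint1 : Integrable (fun ω => s (1, C ω)) μ)
    (hcond : μ[(fun ω => s (B ω, C ω))|MeasurableSpace.comap C mE] =ᵐ[μ] 0) :
    (fun ω => s (B ω, C ω)) =ᵐ[μ]
      fun ω => (s (1, C ω) - s (0, C ω)) *
        (B ω - (μ[B|MeasurableSpace.comap C mE]) ω) := by
  set m := MeasurableSpace.comap C mE with hm_def
  have hm : m ≤ mΩ := hC.comap_le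
  set f : Ω → ℝ := fun ω => s (1, C ω) - s (0, C ω) with hf_def
  -- pointwise identity
  have hpt : ∀ ω, s (B ω, C ω) = s (0, C ω) + f ω * B ω := by
    intro ω
    rcases hB01 ω with h | h <;> rw [h] <;> simp [f]
  -- B is integrable
  have hBint : Integrable B μ := by
    refine (integrable_const (1 : ℝ)).mono' hB.aestronglyMeasurable ?_
    filter_upwards with ω
    rcases hB01 ω with h | h <;> simp [h]
  -- f is strongly measurable wrt m
  have hCm : Measurable[m] C := Measurable.of_comap_le le_rfl
  have hf_meas : StronglyMeasurable[m] f := by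
    have h1 : Measurable fun e : E => s (1, e) - s (0, e) :=
      (hs.comp (measurable_const.prodMk measurable_id)).sub
        (hs.comp (measurable_const.prodMk measurable_id))
    exact (h1.comp hCm).stronglyMeasurable
  have hf_meas0 : StronglyMeasurable[m] (fun ω => s (0, C ω)) := by
    have : Measurable[m] (fun ω => s (0, C ω)) :=
      (hs.comp (measurable_const.prodMk measurable_id)).comp hCm
    exact this.stronglyMeasurable
  -- integrability of f * B
  have hfB_int : Integrable (f * B) μ := by
    have := hint.sub hint0
    refine this.congr ?_
    filter_upwards with ω
    have := hpt ω
    simp only [Pi.mul_apply, Pi.sub_apply]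
    linarith
  -- condexp computation
  have h1 : μ[(fun ω => s (B ω, C ω))|m] =ᵐ[μ]
      (fun ω => s (0, C ω)) + f * μ[B|m] := by
    have hadd : μ[(fun ω => s (B ω, C ω))|m] =ᵐ[μ]
        μ[(fun ω => s (0, C ω))|m] + μ[f * B|m] := by
      have : (fun ω => s (B ω, C ω)) = (fun ω => s (0, C ω)) + f * B := by
        funext ω; simpa using hpt ω
      rw [this]
      exact condExp_add hint0 hfB_int m
    refine hadd.trans (Filter.EventuallyEq.add ?_ ?_)
    · rw [condExp_of_stronglyMeasurable hm hf_meas0 hint0]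
    · exact condExp_mul_of_stronglyMeasurable_left hf_meas hfB_int hBint
  have h2 : (fun ω => s (0, C ω)) + f * μ[B|m] =ᵐ[μ] 0 := h1.symm.trans hcond
  filter_upwards [h2] with ω hω
  have hω' : s (0, C ω) + f ω * (μ[B|m]) ω = 0 := by
    simpa using hω
  have := hpt ω
  show s (B ω, C ω) = f ω * (B ω - (μ[B|m]) ω)
  have : f ω * (μ[B|m]) ω = - s (0, C ω) := by linarith [hω']
  rw [mul_sub, this]
  linarith [hpt ω]
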